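/- Let n ≥ 2, c > 0, and let L_u be the n×n Laplacian of the uniformly weighted line graph. For every integer k with 1 ≤ k ≤ n, the vector v_k ∈ ℝⁿ with entries v_k(j) = sin(j(2k−1)π/(2n+1)) for j = 1, …, n satisfies (L_u + c·e₁e₁ᵀ) v_k = 2c(1 − cos((2k−1)π/(2n+1))) v_k. Hence the DST-7 basis vectors are eigenvectors of the generalized graph Laplacian of the line graph with a self-loop of weight c at the first vertex. -/

import Mathlib

open Matrix Real

/-- The combinatorial Laplacian of the uniformly weighted line graph on `n` vertices with
edge weight `c`. -/
def lineLaplacian (n : ℕ) (c : ℝ) : Matrix (Fin n) (Fin n) ℝ :=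
  Matrix.of fun i j =>
    if i = j then (if i.val = 0 ∨ i.val = n - 1 then c else 2 * c)
    else if i.val + 1 = j.val ∨ j.val + 1 = i.val then -c else 0

/-- DST-7 basis vectors are eigenvectors of the line graph Laplacian with a self-loop of
weight `c` at the first vertex: for `1 ≤ k ≤ n`, the vector with entries
`sin(j(2k−1)π/(2n+1))`, `j = 1, …, n`, is an eigenvector with eigenvalue
`2c(1 − cos((2k−1)π/(2n+1)))`. -/
theorem dst7_eigenvectors (n : ℕ) (hn : 2 ≤ n) (c : ℝ) (hc : 0 < c)
    (k : ℕ) (hk1 : 1 ≤ k) (hk2 : k ≤ n) :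
    (lineLaplacian n c + Matrix.single (⟨0, by omega⟩ : Fin n) ⟨0, by omega⟩ c) *ᵥ
        (fun j : Fin n =>
          Real.sin (((j : ℝ) + 1) * (2 * (k : ℝ) - 1) * Real.pi / (2 * n + 1))) =
      (2 * c * (1 - Real.cos ((2 * (k : ℝ) - 1) * Real.pi / (2 * n + 1)))) •
        (fun j : Fin n =>
          Real.sin (((j : ℝ) + 1) * (2 * (k : ℝ) - 1) * Real.pi / (2 * n + 1))) := by
  set θ : ℝ := (2 * (k:ℝ) - 1) * Real.pi / (2 * (n:ℝ) + 1) with hθ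
  have key : ∀ x : ℝ, Real.sin ((x - 1) * θ) + Real.sin ((x + 1) * θ)
      = 2 * Real.cos θ * Real.sin (x * θ) := by
    intro x
    rw [show (x - 1) * θ = x * θ - θ by ring, show (x + 1) * θ = x * θ + θ by ring,
      Real.sin_sub, Real.sin_add]
    ring
  have hsin_n : Real.sin (((n:ℝ) + 1) * θ) = Real.sin ((n:ℝ) * θ) := by
    have h2n : (2 * (n:ℝ) + 1) ≠ 0 := by positivity
    have h1 : ((n:ℝ) + 1) * θ = -((n:ℝ) * θ + Real.pi) + (k:ℝ) * (2 * Real.pi) := by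
      rw [hθ]; field_simp; ring
    rw [h1, Real.sin_add_nat_mul_two_pi, Real.sin_neg, Real.sin_add_pi, neg_neg]
  have harg : ∀ x : ℝ, (x + 1) * (2 * (k:ℝ) - 1) * Real.pi / (2 * n + 1) = (x + 1) * θ := by
    intro x; rw [hθ]; ring
  set A := lineLaplacian n c + Matrix.single (⟨0, by omega⟩ : Fin n) ⟨0, by omega⟩ c
    with hAdef
  have hA : ∀ i j : Fin n, A i j =
      (if j = i then (if (i:ℕ) = n - 1 then c else 2 * c) else 0) +
      (if (j:ℕ) = (i:ℕ) + 1 then -c else 0) +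
      (if (i:ℕ) = (j:ℕ) + 1 then -c else 0) := by
    intro i j
    simp only [hAdef, Matrix.add_apply, lineLaplacian, Matrix.of_apply,
      Matrix.single, Fin.ext_iff, Fin.val_mk]
    have hi := i.isLt
    have hj := j.isLt
    split_ifs <;> first | omega | ring
  funext i
  have hi := i.isLt
  simp only [Matrix.mulVec, dotProduct, Pi.smul_apply, smul_eq_mul]
  simp only [harg]
  have step1 : ∑ j : Fin n, A i j * Real.sin (((j:ℝ) + 1) * θ)
      = (if (i:ℕ) = n - 1 then c else 2 * c) * Real.sin (((i:ℝ) + 1) * θ) +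
        (if (i:ℕ) + 1 < n then -c * Real.sin ((((i:ℝ) + 1) + 1) * θ) else 0) +
        (if 0 < (i:ℕ) then -c * Real.sin ((((i:ℝ) - 1) + 1) * θ) else 0) := by
    have expand : ∀ j : Fin n, A i j * Real.sin (((j:ℝ) + 1) * θ) =
        (if j = i then (if (i:ℕ) = n - 1 then c else 2 * c) * Real.sin (((j:ℝ) + 1) * θ) else 0) +
        (if (j:ℕ) = (i:ℕ) + 1 then -c * Real.sin (((j:ℝ) + 1) * θ) else 0) +
        (if (i:ℕ) = (j:ℕ) + 1 then -c * Real.sin (((j:ℝ) + 1) * θ) else 0) := by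
      intro j; rw [hA i j]; split_ifs <;> ring
    rw [Finset.sum_congr rfl fun j _ => expand j]
    rw [Finset.sum_add_distrib, Finset.sum_add_distrib]
    congr 1
    · congr 1
      · rw [Finset.sum_ite_eq' Finset.univ i]
        simp
      · by_cases h : (i:ℕ) + 1 < n
        · rw [if_pos h]
          rw [Finset.sum_eq_single_of_mem (⟨(i:ℕ) + 1, h⟩ : Fin n) (Finset.mem_univ _)
            (fun b _ hb => by
              rw [if_neg]
              intro hb'
              exact hb (Fin.ext hb'))]
          rw [if_pos rfl]
          push_cast
          ring_nf
        · rw [if_neg h]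
          refine Finset.sum_eq_zero fun j _ => ?_
          rw [if_neg]
          have := j.isLt
          omega
    · by_cases h : 0 < (i:ℕ)
      · rw [if_pos h]
        rw [Finset.sum_eq_single_of_mem (⟨(i:ℕ) - 1, by omega⟩ : Fin n) (Finset.mem_univ _)
          (fun b _ hb => by
            rw [if_neg]
            intro hb'
            exact hb (Fin.ext (by simp; omega)))]
        rw [if_pos (by simp; omega)]
        have hc1 : (((i:ℕ) - 1 : ℕ) : ℝ) = (i:ℝ) - 1 := by
          rw [Nat.cast_sub (by omega)]; norm_num
        simp only [Fin.val_mk, hc1]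
      · rw [if_neg h]
        refine Finset.sum_eq_zero fun j _ => ?_
        rw [if_neg]
        omega
  rw [step1]
  by_cases h0 : (i:ℕ) = 0
  · have hir : ((i:ℕ) : ℝ) = 0 := by rw [h0]; norm_num
    rw [if_neg (by omega), if_pos (by omega), if_neg (by omega), hir]
    have k1 := key 1
    rw [show ((1:ℝ) - 1) * θ = 0 by ring, Real.sin_zero] at k1
    ring_nf
    ring_nf at k1
    linear_combination (-c) * k1
  · by_cases h1 : (i:ℕ) = n - 1
    · have hir : ((i:ℕ) : ℝ) = (n:ℝ) - 1 := by
        rw [h1, Nat.cast_sub (by omega)]; norm_num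
      rw [if_pos h1, if_neg (by omega), if_pos (by omega), hir]
      have kn := key (n:ℝ)
      ring_nf
      ring_nf at kn hsin_n
      linear_combination (-c) * kn + c * hsin_n
    · rw [if_neg h1, if_pos (by omega), if_pos (by omega)]
      have km := key ((i:ℝ) + 1)
      ring_nf
      ring_nf at km
      linear_combination (-c) * km
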